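/- Let C be a category, D : C → Set a functor, and F a functor from C to unital associative ℂ-algebras. For each natural isomorphism η : F ≅ F, the assignment (η·Φ)_c := η_c ∘ Φ_c maps Fld(D,F) to itself (i.e., the componentwise composition with η is again a natural transformation from D to the underlying-set functor of F), the map Φ ↦ η·Φ is a unital ℂ-algebra automorphism of Fld(D,F), and η ↦ (Φ ↦ η·Φ) is a group homomorphism from the group Aut(F) of natural automorphisms of F to the group of ℂ-algebra automorphisms of Fld(D,F). -/

import Mathlib

open CategoryTheory

/-- The global gauge group `Aut(F)` of a functor `F` from `C` to unital
associative `ℂ`-algebras (encoded as a `Type`-valued functor whose values carry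
`Ring` and `Algebra ℂ` structures): natural automorphisms of `F` all of whose
components (and the components of their inverses) are unital `ℂ`-algebra
homomorphisms.  It is a subgroup of the automorphism group of the underlying
`Type`-valued functor. -/
def gaugeGroup {C : Type*} [Category C] (F : C ⥤ Type u)
    [∀ c : C, Ring (F.obj c)] [∀ c : C, Algebra ℂ (F.obj c)] :
    Subgroup (Aut F) where
  carrier := {η | (∀ c : C, ∃ g : F.obj c →ₐ[ℂ] F.obj c, ⇑g = η.hom.app c) ∧
                  (∀ c : C, ∃ g : F.obj c →ₐ[ℂ] F.obj c, ⇑g = η.inv.app c)}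
  one_mem' :=
    ⟨fun c => ⟨AlgHom.id ℂ (F.obj c), rfl⟩, fun c => ⟨AlgHom.id ℂ (F.obj c), rfl⟩⟩
  mul_mem' := by
    rintro a b ⟨ha1, ha2⟩ ⟨hb1, hb2⟩
    constructor
    · intro c
      obtain ⟨ga, hga⟩ := ha1 c
      obtain ⟨gb, hgb⟩ := hb1 c
      refine ⟨ga.comp gb, ?_⟩
      funext x
      simp [hga, hgb, Aut.Aut_mul_def]
      rfl
    · intro c
      obtain ⟨ga, hga⟩ := ha2 c
      obtain ⟨gb, hgb⟩ := hb2 c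
      refine ⟨gb.comp ga, ?_⟩
      funext x
      simp [hga, hgb, Aut.Aut_mul_def]
      rfl
  inv_mem' := by
    rintro a ⟨ha1, ha2⟩
    exact ⟨fun c => ha2 c, fun c => ha1 c⟩


section Aux

variable {C : Type*} [Category C] (D : C ⥤ Type u) (F : C ⥤ Type u)
    [∀ c : C, Ring (F.obj c)] [∀ c : C, Algebra ℂ (F.obj c)]

/-- Natural transformations `D ⟶ F` as a subalgebra of the Pi algebra. -/
def fldSub
    (hmap_one : ∀ {c c' : C} (ψ : c ⟶ c'), F.map ψ (1 : F.obj c) = 1)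
    (hmap_mul : ∀ {c c' : C} (ψ : c ⟶ c') (x y : F.obj c),
      F.map ψ (x * y) = F.map ψ x * F.map ψ y)
    (hmap_add : ∀ {c c' : C} (ψ : c ⟶ c') (x y : F.obj c),
      F.map ψ (x + y) = F.map ψ x + F.map ψ y)
    (hmap_smul : ∀ {c c' : C} (ψ : c ⟶ c') (a : ℂ) (x : F.obj c),
      F.map ψ (a • x) = a • F.map ψ x) :
    Subalgebra ℂ (∀ c : C, D.obj c → F.obj c) where
  carrier := {s | ∀ {c c' : C} (ψ : c ⟶ c') (f : D.obj c),
      s c' (D.map ψ f) = F.map ψ (s c f)}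
  mul_mem' {s t} hs ht := by
    intro c c' ψ f
    simp [hs ψ f, ht ψ f, hmap_mul]
  add_mem' {s t} hs ht := by
    intro c c' ψ f
    simp [hs ψ f, ht ψ f, hmap_add]
  algebraMap_mem' r := by
    intro c c' ψ f
    show algebraMap ℂ (F.obj c') r = F.map ψ (algebraMap ℂ (F.obj c) r)
    rw [Algebra.algebraMap_eq_smul_one, Algebra.algebraMap_eq_smul_one,
      hmap_smul, hmap_one]

/-- The equivalence between `D ⟶ F` and `fldSub`. -/
def fldEquiv
    (hmap_one : ∀ {c c' : C} (ψ : c ⟶ c'), F.map ψ (1 : F.obj c) = 1)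
    (hmap_mul : ∀ {c c' : C} (ψ : c ⟶ c') (x y : F.obj c),
      F.map ψ (x * y) = F.map ψ x * F.map ψ y)
    (hmap_add : ∀ {c c' : C} (ψ : c ⟶ c') (x y : F.obj c),
      F.map ψ (x + y) = F.map ψ x + F.map ψ y)
    (hmap_smul : ∀ {c c' : C} (ψ : c ⟶ c') (a : ℂ) (x : F.obj c),
      F.map ψ (a • x) = a • F.map ψ x) :
    (D ⟶ F) ≃ (fldSub D F hmap_one hmap_mul hmap_add hmap_smul) where
  toFun Φ := ⟨fun c => Φ.app c, fun {c c'} ψ f => congr_arg (fun g : D.obj c ⟶ F.obj c' => g f) (Φ.naturality ψ)⟩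
  invFun s := { app := fun c => TypeCat.ofHom (s.val c)
                naturality := fun c c' ψ => ConcreteCategory.hom_ext _ _ fun f => s.prop ψ f }
  left_inv Φ := rfl
  right_inv s := rfl

end Aux

/-- **The global gauge group acts on the algebra of locally covariant fields.**
For each natural automorphism `η` of the algebra-valued functor `F`, the
assignment `(η·Φ)_c := η_c ∘ Φ_c` maps `Fld(D,F) = (D ⟶ F)` to itself (the
componentwise composite is again a natural transformation, since `(ρ η) Φ` is an
element of `D ⟶ F`), the map `Φ ↦ η·Φ` is a unital `ℂ`-algebra automorphism of
`Fld(D,F)` with its pointwise algebra structure, and `η ↦ (Φ ↦ η·Φ)` is a group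
homomorphism from the gauge group to the group of `ℂ`-algebra automorphisms of
`Fld(D,F)`. -/


theorem gaugeGroup_acts_on_fields
    {C : Type*} [Category C] (D : C ⥤ Type u) (F : C ⥤ Type u)
    [∀ c : C, Ring (F.obj c)] [∀ c : C, Algebra ℂ (F.obj c)]
    (hmap_one : ∀ {c c' : C} (ψ : c ⟶ c'), F.map ψ (1 : F.obj c) = 1)
    (hmap_mul : ∀ {c c' : C} (ψ : c ⟶ c') (x y : F.obj c),
      F.map ψ (x * y) = F.map ψ x * F.map ψ y)
    (hmap_add : ∀ {c c' : C} (ψ : c ⟶ c') (x y : F.obj c),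
      F.map ψ (x + y) = F.map ψ x + F.map ψ y)
    (hmap_smul : ∀ {c c' : C} (ψ : c ⟶ c') (a : ℂ) (x : F.obj c),
      F.map ψ (a • x) = a • F.map ψ x) :
    ∃ ringInst : Ring (D ⟶ F),
      letI := ringInst
      ∃ algInst : Algebra ℂ (D ⟶ F),
        letI := algInst
        -- the algebra structure on Fld(D,F) is the pointwise one
        ((∀ (Φ Ψ : D ⟶ F) (c : C) (f : D.obj c),
            (Φ + Ψ).app c f = Φ.app c f + Ψ.app c f) ∧
         (∀ (a : ℂ) (Φ : D ⟶ F) (c : C) (f : D.obj c),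
            (a • Φ).app c f = a • Φ.app c f) ∧
         (∀ (Φ Ψ : D ⟶ F) (c : C) (f : D.obj c),
            (Φ * Ψ).app c f = Φ.app c f * Ψ.app c f) ∧
         (∀ (c : C) (f : D.obj c), (1 : D ⟶ F).app c f = 1)) ∧
        -- the gauge group acts by ℂ-algebra automorphisms, via a group
        -- homomorphism, and the action is the componentwise one
        ∃ ρ : gaugeGroup F →* ((D ⟶ F) ≃ₐ[ℂ] (D ⟶ F)),
          ∀ (η : gaugeGroup F) (Φ : D ⟶ F) (c : C) (f : D.obj c),
            (ρ η Φ).app c f = (η : Aut F).hom.app c (Φ.app c f) := by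
  classical
  set e := fldEquiv D F hmap_one hmap_mul hmap_add hmap_smul with he
  letI ringInst : Ring (D ⟶ F) := Equiv.ring e
  letI algInst : Algebra ℂ (D ⟶ F) := Equiv.algebra ℂ e
  have happ_add : ∀ (Φ Ψ : D ⟶ F) (c : C) (f : D.obj c),
      (Φ + Ψ).app c f = Φ.app c f + Ψ.app c f := fun Φ Ψ c f => rfl
  have happ_smul : ∀ (a : ℂ) (Φ : D ⟶ F) (c : C) (f : D.obj c),
      (a • Φ).app c f = a • Φ.app c f := fun a Φ c f => rfl
  have happ_mul : ∀ (Φ Ψ : D ⟶ F) (c : C) (f : D.obj c),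
      (Φ * Ψ).app c f = Φ.app c f * Ψ.app c f := fun Φ Ψ c f => rfl
  have happ_one : ∀ (c : C) (f : D.obj c), (1 : D ⟶ F).app c f = 1 :=
    fun c f => rfl
  refine ⟨ringInst, algInst, ⟨happ_add, happ_smul, happ_mul, happ_one⟩, ?_⟩
  -- the action of a gauge transformation
  have key : ∀ (η : gaugeGroup F) (Φ : D ⟶ F) (c : C) (f : D.obj c),
      (Φ ≫ (η : Aut F).hom).app c f = (η : Aut F).hom.app c (Φ.app c f) :=
    fun η Φ c f => rfl
  -- build the algebra automorphism attached to η
  let mk : gaugeGroup F → ((D ⟶ F) ≃ₐ[ℂ] (D ⟶ F)) := fun η =>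
    { toFun := fun Φ => Φ ≫ (η : Aut F).hom
      invFun := fun Φ => Φ ≫ (η : Aut F).inv
      left_inv := fun Φ => (Category.assoc Φ _ _).trans ((congrArg (Φ ≫ ·) (Iso.hom_inv_id ((η : Aut F) : F ≅ F))).trans (Category.comp_id Φ))
      right_inv := fun Φ => (Category.assoc Φ _ _).trans ((congrArg (Φ ≫ ·) (Iso.inv_hom_id ((η : Aut F) : F ≅ F))).trans (Category.comp_id Φ))
      map_mul' := by
        intro Φ Ψ
        apply NatTrans.ext; funext c; apply ConcreteCategory.hom_ext; intro f
        obtain ⟨g, hg⟩ := η.2.1 c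
        show (η : Aut F).hom.app c ((Φ * Ψ).app c f)
          = (η : Aut F).hom.app c (Φ.app c f) * (η : Aut F).hom.app c (Ψ.app c f)
        rw [happ_mul, ← hg, map_mul]
      map_add' := by
        intro Φ Ψ
        apply NatTrans.ext; funext c; apply ConcreteCategory.hom_ext; intro f
        obtain ⟨g, hg⟩ := η.2.1 c
        show (η : Aut F).hom.app c ((Φ + Ψ).app c f)
          = (η : Aut F).hom.app c (Φ.app c f) + (η : Aut F).hom.app c (Ψ.app c f)
        rw [happ_add, ← hg, map_add]
      commutes' := by
        intro r
        apply NatTrans.ext; funext c; apply ConcreteCategory.hom_ext; intro f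
        obtain ⟨g, hg⟩ := η.2.1 c
        have halg : ∀ (c : C) (f : D.obj c),
            (algebraMap ℂ (D ⟶ F) r).app c f = algebraMap ℂ (F.obj c) r := by
          intro c f
          rw [Algebra.algebraMap_eq_smul_one]
          rw [happ_smul, happ_one, ← Algebra.algebraMap_eq_smul_one]
        show (η : Aut F).hom.app c ((algebraMap ℂ (D ⟶ F) r).app c f)
          = (algebraMap ℂ (D ⟶ F) r).app c f
        rw [halg, ← hg, AlgHom.commutes] }
  refine ⟨{ toFun := mk
            map_one' := ?_
            map_mul' := ?_ }, fun η Φ c f => rfl⟩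
  · apply AlgEquiv.ext; intro Φ
    show Φ ≫ ((1 : gaugeGroup F) : Aut F).hom = Φ
    simp
    rfl
  · intro η₁ η₂
    apply AlgEquiv.ext; intro Φ
    show Φ ≫ ((η₁ : Aut F) * (η₂ : Aut F)).hom
      = (Φ ≫ (η₂ : Aut F).hom) ≫ (η₁ : Aut F).hom
    rw [Aut.Aut_mul_def]
    simp
    rfl
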